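/- Let d ≥ 1 and fix y ∈ (ℤ/2ℤ)^d. For t ∈ [0,1) and z ∈ (ℤ/2ℤ)^d define ψ_t(z) := ∑_{i=1}^d log(1 + (−1)^{z_i + y_i}·e^{−2(1−t)}), where z_i, y_i ∈ {0,1} are the coordinates and z^i := z + g_i denotes z with its i-th coordinate flipped. Then: (i) for every z, t ↦ ψ_t(z) is differentiable on [0,1) and ∂_t ψ_t(z) + ∑_{i=1}^d (exp(ψ_t(z^i) − ψ_t(z)) − 1) = 0; (ii) for every t ∈ [0,1), every z and every i, exp(ψ_t(z^i) − ψ_t(z)) = tanh(1−t) if z_i = y_i and exp(ψ_t(z^i) − ψ_t(z)) = coth(1−t) if z_i ≠ y_i. -/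

import Mathlib

/-- The potential `ψ_t(z) = ∑ᵢ log(1 + (−1)^{zᵢ + yᵢ} e^{−2(1−t)})` on the hypercube
`(ℤ/2ℤ)^d`, where `(−1)^{zᵢ + yᵢ} = 1` iff `zᵢ = yᵢ`. -/
noncomputable def hyperPsi (d : ℕ) (y : Fin d → ZMod 2) (t : ℝ) (z : Fin d → ZMod 2) : ℝ :=
  ∑ i : Fin d,
    Real.log (1 + (if z i = y i then (1 : ℝ) else -1) * Real.exp (-2 * (1 - t)))

private lemma zmod2_flip : ∀ a b : ZMod 2, (a + 1 = b ↔ ¬ a = b) := by decide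

private lemma key_diff (d : ℕ) (y : Fin d → ZMod 2) (t : ℝ) (z : Fin d → ZMod 2) (i : Fin d) :
    hyperPsi d y t (z + Pi.single i 1) - hyperPsi d y t z =
      Real.log (1 + (if z i = y i then (-1 : ℝ) else 1) * Real.exp (-2 * (1 - t))) -
      Real.log (1 + (if z i = y i then (1 : ℝ) else -1) * Real.exp (-2 * (1 - t))) := by
  unfold hyperPsi
  rw [← Finset.sum_sub_distrib, Finset.sum_eq_single i]
  · have h1 : (z + Pi.single i 1 : Fin d → ZMod 2) i = z i + 1 := by simp
    rw [h1]
    by_cases h0 : z i = y i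
    · have h2 : ¬ (z i + 1 = y i) := by rw [zmod2_flip]; simpa using h0
      simp [h0, h2]
    · have h2 : z i + 1 = y i := (zmod2_flip _ _).mpr h0
      simp [h0, h2]
  · intro j _ hj
    have h3 : (z + Pi.single i 1 : Fin d → ZMod 2) j = z j := by simp [Pi.single_eq_of_ne hj]
    rw [h3]; ring
  · simp

private lemma exp_diff (d : ℕ) (y : Fin d → ZMod 2) {t : ℝ} (ht : t < 1)
    (z : Fin d → ZMod 2) (i : Fin d) :
    Real.exp (hyperPsi d y t (z + Pi.single i 1) - hyperPsi d y t z) =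
      (1 + (if z i = y i then (-1 : ℝ) else 1) * Real.exp (-2 * (1 - t))) /
      (1 + (if z i = y i then (1 : ℝ) else -1) * Real.exp (-2 * (1 - t))) := by
  have he0 : (0:ℝ) < Real.exp (-2 * (1 - t)) := Real.exp_pos _
  have he1 : Real.exp (-2 * (1 - t)) < 1 := by
    apply Real.exp_lt_one_iff.mpr; nlinarith
  have hA : (0:ℝ) < 1 + (if z i = y i then (-1 : ℝ) else 1) * Real.exp (-2 * (1 - t)) := by
    split <;> nlinarith
  have hB : (0:ℝ) < 1 + (if z i = y i then (1 : ℝ) else -1) * Real.exp (-2 * (1 - t)) := by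
    split <;> nlinarith
  rw [key_diff, Real.exp_sub, Real.exp_log hA, Real.exp_log hB]

private lemma tanh_aux (u : ℝ) :
    (1 - Real.exp (-2 * u)) / (1 + Real.exp (-2 * u)) = Real.tanh u := by
  rw [Real.tanh_eq_sinh_div_cosh, Real.sinh_eq, Real.cosh_eq]
  have hab : Real.exp u * Real.exp (-u) = 1 := by rw [← Real.exp_add]; simp
  have he : Real.exp (-2 * u) = Real.exp (-u) * Real.exp (-u) := by
    rw [← Real.exp_add]; ring_nf
  have h1 : (0:ℝ) < 1 + Real.exp (-2 * u) := by positivity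
  have h2 : (0:ℝ) < Real.exp u + Real.exp (-u) := by positivity
  rw [he] at h1 ⊢
  field_simp
  nlinarith [hab, Real.exp_pos u, Real.exp_pos (-u)]

private lemma coth_aux {u : ℝ} (hu : 0 < u) :
    (1 + Real.exp (-2 * u)) / (1 - Real.exp (-2 * u)) = Real.cosh u / Real.sinh u := by
  rw [Real.sinh_eq, Real.cosh_eq]
  have hab : Real.exp u * Real.exp (-u) = 1 := by rw [← Real.exp_add]; simp
  have he : Real.exp (-2 * u) = Real.exp (-u) * Real.exp (-u) := by
    rw [← Real.exp_add]; ring_nf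
  have he1 : Real.exp (-2 * u) < 1 := by
    apply Real.exp_lt_one_iff.mpr; nlinarith
  have h1 : (0:ℝ) < 1 - Real.exp (-2 * u) := by nlinarith
  have h2 : (0:ℝ) < Real.exp u - Real.exp (-u) := by
    have := Real.exp_lt_exp.mpr (show -u < u by nlinarith)
    nlinarith
  rw [he] at h1 ⊢
  field_simp
  rw [div_eq_iff (by nlinarith)]
  nlinarith [hab, Real.exp_pos u, Real.exp_pos (-u)]

private lemma hasDeriv_term (ε t : ℝ) (hne : 1 + ε * Real.exp (-2 * (1 - t)) ≠ 0) :
    HasDerivAt (fun s => Real.log (1 + ε * Real.exp (-2 * (1 - s))))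
      (ε * (2 * Real.exp (-2 * (1 - t))) / (1 + ε * Real.exp (-2 * (1 - t)))) t := by
  have h1 : HasDerivAt (fun s : ℝ => -2 * (1 - s)) 2 t := by
    have := ((hasDerivAt_id t).const_sub 1).const_mul (-2 : ℝ)
    simpa using this
  have h4 := (((h1.exp).const_mul ε).const_add 1).log hne
  convert h4 using 1
  ring

theorem stmt11 (d : ℕ) (hd : 1 ≤ d) (y : Fin d → ZMod 2) :
    (∀ z : Fin d → ZMod 2, ∀ t ∈ Set.Ico (0 : ℝ) 1,
      ∃ D : ℝ, HasDerivAt (fun s => hyperPsi d y s z) D t ∧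
        D + ∑ i : Fin d,
          (Real.exp (hyperPsi d y t (z + Pi.single i 1) - hyperPsi d y t z) - 1) = 0) ∧
    (∀ t ∈ Set.Ico (0 : ℝ) 1, ∀ (z : Fin d → ZMod 2) (i : Fin d),
      (z i = y i →
        Real.exp (hyperPsi d y t (z + Pi.single i 1) - hyperPsi d y t z) =
          Real.tanh (1 - t)) ∧
      (z i ≠ y i →
        Real.exp (hyperPsi d y t (z + Pi.single i 1) - hyperPsi d y t z) =
          Real.cosh (1 - t) / Real.sinh (1 - t))) := by
  constructor
  · intro z t ht
    obtain ⟨ht0, ht1⟩ := ht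
    have he0 : (0:ℝ) < Real.exp (-2 * (1 - t)) := Real.exp_pos _
    have he1 : Real.exp (-2 * (1 - t)) < 1 := by
      apply Real.exp_lt_one_iff.mpr; nlinarith
    have hne : ∀ j : Fin d,
        1 + (if z j = y j then (1:ℝ) else -1) * Real.exp (-2 * (1 - t)) ≠ 0 := by
      intro j; split <;> nlinarith
    refine ⟨∑ j : Fin d, (if z j = y j then (1:ℝ) else -1) *
        (2 * Real.exp (-2 * (1 - t))) /
        (1 + (if z j = y j then (1:ℝ) else -1) * Real.exp (-2 * (1 - t))), ?_, ?_⟩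
    · unfold hyperPsi
      exact HasDerivAt.fun_sum (fun j _ => hasDeriv_term _ t (hne j))
    · have hrw : ∀ j : Fin d,
          Real.exp (hyperPsi d y t (z + Pi.single j 1) - hyperPsi d y t z) =
            (1 + (if z j = y j then (-1 : ℝ) else 1) * Real.exp (-2 * (1 - t))) /
            (1 + (if z j = y j then (1 : ℝ) else -1) * Real.exp (-2 * (1 - t))) :=
        fun j => exp_diff d y ht1 z j
      simp only [hrw]
      rw [← Finset.sum_add_distrib]
      apply Finset.sum_eq_zero
      intro j _
      set E := Real.exp (-2 * (1 - t)) with hE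
      by_cases h0 : z j = y j
      · simp only [h0, if_pos, if_true]
        have h : (1:ℝ) + 1 * E ≠ 0 := by nlinarith
        field_simp
        ring
      · simp only [h0, if_neg, if_false]
        have h : (1:ℝ) - E ≠ 0 := by nlinarith
        have goal2 : (-1:ℝ) * (2 * E) / (1 + -1 * E) + ((1 + 1 * E) / (1 + -1 * E) - 1) = 0 := by
          rw [show (1:ℝ) + -1 * E = 1 - E by ring]
          field_simp
          ring
        convert goal2 using 2 <;> ring
  · intro t ht z i
    obtain ⟨ht0, ht1⟩ := ht
    have hu : (0:ℝ) < 1 - t := by linarith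
    constructor
    · intro h0
      rw [exp_diff d y ht1 z i]
      simp only [h0, if_true]
      rw [← tanh_aux (1 - t)]
      ring_nf
    · intro h0
      rw [exp_diff d y ht1 z i]
      simp only [h0, if_false]
      rw [← coth_aux hu]
      ring_nf
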